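/- arXiv:1801.01945 — 4 statements merged into one kernel-verified Lean document; each statement's English description precedes it below -/
import Mathlib

section
/- Area argument, complex version: Let Q = P1P2P3P4 be a cyclic quadrilateral in ℂ (four points on a common circle), and let (λ1,...,λ4) be an affine dependence of the Pi. Let γ1,...,γ4 : [t0,t1] → ℂ be piecewise C¹ curves such that for each t, the quadrilateral γ1(t)γ2(t)γ3(t)γ4(t) is directly similar to Q (i.e., there exist o(t) ∈ ℂ and ρ(t) ∈ ℂ \ {0} with γi(t) = o(t) + ρ(t)(Pi − O), where O is the circumcenter of Q). Then Σᵢ₌₁⁴ λi ∫_{t0}^{t1} γi(t) d(conj γi(t)) = 0. -/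
open scoped BigOperators

/-- Area argument, complex version: Let `P₁P₂P₃P₄` be a cyclic quadrilateral in `ℂ`
(circumcenter `O`, radius `r > 0`), `(λ₁,…,λ₄)` an affine dependence of the `Pᵢ`, and
`γ₁,…,γ₄ : [t₀,t₁] → ℂ` be (piecewise) C¹ curves such that for each `t` the quadrilateral
`γ₁(t)γ₂(t)γ₃(t)γ₄(t)` is directly similar to `Q`, i.e. `γᵢ(t) = o(t) + ρ(t)(Pᵢ − O)` with
`ρ(t) ≠ 0`.  Then `Σᵢ λᵢ ∫ γᵢ d(conj γᵢ) = 0`. -/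
theorem stmt1 (t0 t1 : ℝ)
    (P : Fin 4 → ℂ) (O : ℂ) (r : ℝ) (hr : 0 < r)
    (hcirc : ∀ i, ‖P i - O‖ = r)
    (lam : Fin 4 → ℝ) (hlam : lam ≠ 0)
    (hsum : ∑ i, lam i = 0)
    (hdep : ∑ i, (lam i : ℂ) • P i = 0)
    (γ γ' : Fin 4 → ℝ → ℂ)
    (hderiv : ∀ i t, HasDerivAt (γ i) (γ' i t) t)
    (hcont : ∀ i, Continuous (γ' i))
    (o ρ : ℝ → ℂ) (hρ : ∀ t, ρ t ≠ 0)
    (hsim : ∀ i t, γ i t = o t + ρ t * (P i - O)) :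
    ∑ i, (lam i : ℂ) * ∫ t in t0..t1, γ i t * (starRingEnd ℂ) (γ' i t) = 0 := by
  have e1 : (lam 0 : ℂ) + lam 1 + lam 2 + lam 3 = 0 := by
    have h : ((∑ i, lam i : ℝ) : ℂ) = 0 := by rw [hsum]; norm_num
    rw [Fin.sum_univ_four] at h; push_cast at h; exact h
  have e2 : (lam 0 : ℂ) * (P 0 - O) + (lam 1 : ℂ) * (P 1 - O) + (lam 2 : ℂ) * (P 2 - O)
      + (lam 3 : ℂ) * (P 3 - O) = 0 := by
    have h : (lam 0 : ℂ) * P 0 + (lam 1 : ℂ) * P 1 + (lam 2 : ℂ) * P 2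
        + (lam 3 : ℂ) * P 3 = 0 := by
      have := hdep
      rw [Fin.sum_univ_four] at this
      simpa [smul_eq_mul] using this
    linear_combination h - O * e1
  have e3 : (lam 0 : ℂ) * (starRingEnd ℂ) (P 0 - O) + (lam 1 : ℂ) * (starRingEnd ℂ) (P 1 - O)
      + (lam 2 : ℂ) * (starRingEnd ℂ) (P 2 - O)
      + (lam 3 : ℂ) * (starRingEnd ℂ) (P 3 - O) = 0 := by
    have := congrArg (starRingEnd ℂ) e2
    simpa only [map_add, map_mul, map_zero, Complex.conj_ofReal] using this
  have e4 : ∀ i, (P i - O) * (starRingEnd ℂ) (P i - O) = ((r : ℂ)) ^ 2 := by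
    intro i
    rw [Complex.mul_conj, Complex.normSq_eq_norm_sq, hcirc i]
    push_cast; ring
  have hzero : ∀ t, ∑ i, (lam i : ℂ) * (γ i t * (starRingEnd ℂ) (γ' i t)) = 0 := by
    by_cases hP : ∀ i, P i = P 0
    · intro t
      have hg : ∀ i, γ i = γ 0 := fun i => funext fun s => by rw [hsim i s, hsim 0 s, hP i]
      have hg' : ∀ i, γ' i t = γ' 0 t := by
        intro i
        have h1 := hderiv i t
        rw [hg i] at h1
        exact h1.unique (hderiv 0 t)
      rw [Fin.sum_univ_four, hg 1, hg 2, hg 3, hg' 1, hg' 2, hg' 3]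
      linear_combination (γ 0 t * (starRingEnd ℂ) (γ' 0 t)) * e1
    · push_neg at hP
      obtain ⟨j, hj⟩ := hP
      have hdne : P j - P 0 ≠ 0 := sub_ne_zero.mpr hj
      have hρeq : ρ = fun s => (γ j s - γ 0 s) / (P j - P 0) := by
        funext s
        have h : γ j s - γ 0 s = ρ s * (P j - P 0) := by rw [hsim j s, hsim 0 s]; ring
        field_simp [h]
        exact h.symm
      set ρ' : ℝ → ℂ := fun s => (γ' j s - γ' 0 s) / (P j - P 0) with hρ'def
      have hρd : ∀ s, HasDerivAt ρ (ρ' s) s := by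
        intro s
        rw [hρeq]
        exact ((hderiv j s).sub (hderiv 0 s)).div_const _
      have hkey : ∀ i s, γ' i s = γ' 0 s + ρ' s * (P i - P 0) := by
        intro i s
        have hfun : γ i = fun u => γ 0 u + ρ u * (P i - P 0) := by
          funext u; rw [hsim i u, hsim 0 u]; ring
        have h2 : HasDerivAt (fun u => γ 0 u + ρ u * (P i - P 0))
            (γ' 0 s + ρ' s * (P i - P 0)) s := (hderiv 0 s).add ((hρd s).mul_const _)
        have h1 := hderiv i s
        rw [hfun] at h1
        exact h1.unique h2
      intro t
      have hγ' : ∀ i, γ' i t = (γ' 0 t - ρ' t * (P 0 - O)) + ρ' t * (P i - O) := by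
        intro i; rw [hkey i t]; ring
      rw [Fin.sum_univ_four, hsim 0 t, hsim 1 t, hsim 2 t, hsim 3 t,
        hγ' 0, hγ' 1, hγ' 2, hγ' 3]
      simp only [map_add, map_mul, map_sub]
      set A := (starRingEnd ℂ) (γ' 0 t)
      set B := (starRingEnd ℂ) (ρ' t)
      have e3' : (lam 0 : ℂ) * ((starRingEnd ℂ) (P 0) - (starRingEnd ℂ) O)
          + (lam 1 : ℂ) * ((starRingEnd ℂ) (P 1) - (starRingEnd ℂ) O)
          + (lam 2 : ℂ) * ((starRingEnd ℂ) (P 2) - (starRingEnd ℂ) O)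
          + (lam 3 : ℂ) * ((starRingEnd ℂ) (P 3) - (starRingEnd ℂ) O) = 0 := by
        simpa only [map_sub] using e3
      have e4' : ∀ i, (P i - O) * ((starRingEnd ℂ) (P i) - (starRingEnd ℂ) O)
          = ((r : ℂ)) ^ 2 := by
        intro i; simpa only [map_sub] using e4 i
      linear_combination (o t * A - o t * B * ((starRingEnd ℂ) (P 0) - (starRingEnd ℂ) O)
            + ρ t * B * (r : ℂ) ^ 2) * e1
          + (A - B * ((starRingEnd ℂ) (P 0) - (starRingEnd ℂ) O)) * ρ t * e2
          + o t * B * e3'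
          + ρ t * B * ((lam 0 : ℂ) * e4' 0 + (lam 1 : ℂ) * e4' 1 + (lam 2 : ℂ) * e4' 2
            + (lam 3 : ℂ) * e4' 3)
  have hcontγ : ∀ i, Continuous (γ i) := fun i =>
    continuous_iff_continuousAt.mpr fun t => (hderiv i t).continuousAt
  have hint : ∀ i, IntervalIntegrable (fun t => γ i t * (starRingEnd ℂ) (γ' i t))
      MeasureTheory.volume t0 t1 := fun i =>
    ((hcontγ i).mul (Complex.continuous_conj.comp (hcont i))).intervalIntegrable _ _
  calc ∑ i, (lam i : ℂ) * ∫ t in t0..t1, γ i t * (starRingEnd ℂ) (γ' i t)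
      = ∑ i, ∫ t in t0..t1, (lam i : ℂ) * (γ i t * (starRingEnd ℂ) (γ' i t)) := by
        refine Finset.sum_congr rfl fun i _ => ?_
        rw [← intervalIntegral.integral_const_mul]
    _ = ∫ t in t0..t1, ∑ i, (lam i : ℂ) * (γ i t * (starRingEnd ℂ) (γ' i t)) :=
        (intervalIntegral.integral_finset_sum (fun i _ => (hint i).const_mul _)).symm
    _ = 0 := by simp only [hzero, intervalIntegral.integral_zero]
end

section
/- Pointwise form of the area argument: Let P1,...,P4 ∈ ℂ lie on a circle centered at the origin, and let (λ1,...,λ4) be an affine dependence of P1,...,P4. Let o, ρ : [t0,t1] → ℂ be C¹, with ρ nonvanishing, and set γi(t) = o(t) + ρ(t)Pi. Then for all t, Σᵢ λi γi(t) · conj(γi'(t)) = 0. -/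
open scoped BigOperators

/-- Pointwise form of the area argument: Let `P₁,…,P₄ ∈ ℂ` lie on a circle of
radius `r` centered at the origin and let `(λ₁,…,λ₄)` be an affine dependence of the `Pᵢ`.
Let `o, ρ : ℝ → ℂ` be C¹ with `ρ` nonvanishing, and set `γᵢ(t) = o(t) + ρ(t)·Pᵢ`
(so `γᵢ'(t) = o'(t) + ρ'(t)·Pᵢ`).  Then for all `t`,
`Σᵢ λᵢ · γᵢ(t) · conj(γᵢ'(t)) = 0`. -/
theorem stmt2 (r : ℝ)
    (P : Fin 4 → ℂ) (hP : ∀ i, ‖P i‖ = r)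
    (lam : Fin 4 → ℝ) (hlam : lam ≠ 0)
    (hsum : ∑ i, lam i = 0)
    (hdep : ∑ i, (lam i : ℂ) • P i = 0)
    (o ρ o' ρ' : ℝ → ℂ)
    (ho : ∀ t, HasDerivAt o (o' t) t)
    (hρderiv : ∀ t, HasDerivAt ρ (ρ' t) t)
    (hρ : ∀ t, ρ t ≠ 0) :
    ∀ t : ℝ, ∑ i, (lam i : ℂ) *
      ((o t + ρ t * P i) * (starRingEnd ℂ) (o' t + ρ' t * P i)) = 0 := by
  intro t
  have hconj : ∑ i, (lam i : ℂ) * (starRingEnd ℂ) (P i) = 0 := by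
    have := congrArg (starRingEnd ℂ) hdep
    simpa [map_sum, smul_eq_mul] using this
  have hdep' : ∑ i, (lam i : ℂ) * P i = 0 := by simpa [smul_eq_mul] using hdep
  have hsum' : ∑ i, (lam i : ℂ) = 0 := by
    rw [← Complex.ofReal_sum, hsum, Complex.ofReal_zero]
  have habs : ∀ i, P i * (starRingEnd ℂ) (P i) = (r : ℂ)^2 := by
    intro i
    rw [Complex.mul_conj]
    rw [Complex.normSq_eq_norm_sq, hP i]
    norm_cast
  have key : ∑ i, (lam i : ℂ) * (P i * (starRingEnd ℂ) (P i)) = 0 := by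
    simp only [habs]
    rw [← Finset.sum_mul, hsum', zero_mul]
  have expand : ∀ i, (lam i : ℂ) *
      ((o t + ρ t * P i) * (starRingEnd ℂ) (o' t + ρ' t * P i)) =
      (lam i : ℂ) * (o t * (starRingEnd ℂ) (o' t))
      + (o t * (starRingEnd ℂ) (ρ' t)) * ((lam i : ℂ) * (starRingEnd ℂ) (P i))
      + (ρ t * (starRingEnd ℂ) (o' t)) * ((lam i : ℂ) * P i)
      + (ρ t * (starRingEnd ℂ) (ρ' t)) * ((lam i : ℂ) * (P i * (starRingEnd ℂ) (P i))) := by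
    intro i; simp only [map_add, map_mul]; ring
  simp only [expand, Finset.sum_add_distrib, ← Finset.sum_mul, ← Finset.mul_sum,
    hconj, hdep', key, hsum', zero_mul, mul_zero, add_zero, zero_add]
end

section
/- Corollary on equal areas: Let P1P2P3P4 be a cyclic quadrilateral in ℂ (no three vertices collinear), and let γ1,...,γ4 : [t0,t1] → ℂ be piecewise C¹ closed curves such that for each t the quadrilateral γ1(t)γ2(t)γ3(t)γ4(t) is directly similar to P1P2P3P4. If γ1, γ2, γ3 each enclose signed area A (in the sense of Green's integral −∫ y dx), then γ4 also encloses signed area A. -/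
open MeasureTheory

open scoped BigOperators

lemma collinear_of_det_eq_zero (a b c : ℂ)
    (h : (b - a).re * (c - a).im - (b - a).im * (c - a).re = 0) :
    Collinear ℝ ({a, b, c} : Set ℂ) := by
  by_cases hca : c = a
  · apply (collinear_pair ℝ a b).subset
    intro x hx
    rcases hx with rfl | rfl | rfl <;> simp [hca]
  · have hv : c - a ≠ 0 := sub_ne_zero.mpr hca
    rw [collinear_iff_of_mem (Set.mem_insert a _)]
    refine ⟨c - a, fun p hp => ?_⟩
    rcases hp with rfl | rfl | rfl
    · exact ⟨0, by simp⟩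
    · refine ⟨((p - a).re * (c - a).re + (p - a).im * (c - a).im) / Complex.normSq (c - a), ?_⟩
      have hn : (c.re - a.re) * (c.re - a.re) + (c.im - a.im) * (c.im - a.im) ≠ 0 := by
        have h1 : 0 < Complex.normSq (c - a) := Complex.normSq_pos.mpr hv
        rw [Complex.normSq_apply] at h1; simp only [Complex.sub_re, Complex.sub_im] at h1
        nlinarith
      have hn2 : (c.re - a.re) ^ 2 + (c.im - a.im) ^ 2 ≠ 0 := by rw [sq, sq]; exact hn
      simp only [Complex.sub_re, Complex.sub_im] at h
      apply Complex.ext <;>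
        simp only [Complex.real_smul, vadd_eq_add, Complex.add_re, Complex.add_im,
          Complex.mul_re, Complex.mul_im, Complex.ofReal_re, Complex.ofReal_im,
          Complex.normSq_apply, Complex.sub_re, Complex.sub_im] <;>
        field_simp <;> [linear_combination (c.im - a.im) * h; linear_combination (-(c.re - a.re)) * h]
    · exact ⟨1, by simp⟩

lemma integral_six (t0 t1 : ℝ) (f0 f1 f2 f3 f4 f5 : ℝ → ℝ)
    (h0 : Continuous f0) (h1 : Continuous f1) (h2 : Continuous f2)
    (h3 : Continuous f3) (h4 : Continuous f4) (h5 : Continuous f5)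
    (c1 c2 c3 c4 c5 : ℝ) :
    (∫ t in t0..t1, (f0 t + c1 * f1 t + c2 * f2 t + c3 * f3 t + c4 * f4 t + c5 * f5 t))
    = (∫ t in t0..t1, f0 t) + c1 * (∫ t in t0..t1, f1 t) + c2 * (∫ t in t0..t1, f2 t)
      + c3 * (∫ t in t0..t1, f3 t) + c4 * (∫ t in t0..t1, f4 t)
      + c5 * (∫ t in t0..t1, f5 t) := by
  have i0 : IntervalIntegrable f0 volume t0 t1 := h0.intervalIntegrable _ _
  have i1 : IntervalIntegrable (fun t => c1 * f1 t) volume t0 t1 := (continuous_const.mul h1).intervalIntegrable _ _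
  have i2 : IntervalIntegrable (fun t => c2 * f2 t) volume t0 t1 := (continuous_const.mul h2).intervalIntegrable _ _
  have i3 : IntervalIntegrable (fun t => c3 * f3 t) volume t0 t1 := (continuous_const.mul h3).intervalIntegrable _ _
  have i4 : IntervalIntegrable (fun t => c4 * f4 t) volume t0 t1 := (continuous_const.mul h4).intervalIntegrable _ _
  have i5 : IntervalIntegrable (fun t => c5 * f5 t) volume t0 t1 := (continuous_const.mul h5).intervalIntegrable _ _
  rw [intervalIntegral.integral_add ((((i0.add i1).add i2).add i3).add i4) i5,
      intervalIntegral.integral_add (((i0.add i1).add i2).add i3) i4,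
      intervalIntegral.integral_add ((i0.add i1).add i2) i3,
      intervalIntegral.integral_add (i0.add i1) i2,
      intervalIntegral.integral_add i0 i1,
      intervalIntegral.integral_const_mul, intervalIntegral.integral_const_mul,
      intervalIntegral.integral_const_mul, intervalIntegral.integral_const_mul,
      intervalIntegral.integral_const_mul]


/-- Corollary on equal areas: Let `P₁P₂P₃P₄` be a cyclic quadrilateral in `ℂ`
(no three vertices collinear) and let `γᵢ(t) = o(t) + ρ(t)·Pᵢ` (with `ρ(t) ≠ 0`) be C¹ closed
curves of quadrilaterals directly similar to `P₁P₂P₃P₄`.  If `γ₁, γ₂, γ₃` each enclose signed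
area `A` (Green's integral `−∫ y dx`), then so does `γ₄`. -/
theorem stmt5 (t0 t1 : ℝ)
    (P : Fin 4 → ℂ) (O : ℂ) (r : ℝ) (hr : 0 < r)
    (hcirc : ∀ i, ‖P i - O‖ = r)
    (hgen : ∀ i j k : Fin 4, i ≠ j → j ≠ k → i ≠ k →
      ¬ Collinear ℝ ({P i, P j, P k} : Set ℂ))
    (o ρ o' ρ' : ℝ → ℂ)
    (ho : ∀ t, HasDerivAt o (o' t) t)
    (hρderiv : ∀ t, HasDerivAt ρ (ρ' t) t)
    (ho' : Continuous o') (hρ' : Continuous ρ')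
    (hρ : ∀ t, ρ t ≠ 0)
    (γ γ' : Fin 4 → ℝ → ℂ)
    (hγ : ∀ i t, γ i t = o t + ρ t * P i)
    (hγ' : ∀ i t, γ' i t = o' t + ρ' t * P i)
    (hclosed : ∀ i, γ i t0 = γ i t1)
    (A : ℝ)
    (hA : ∀ i : Fin 4, i ≠ 3 →
      -(∫ t in t0..t1, (γ i t).im * (γ' i t).re) = A) :
    -(∫ t in t0..t1, (γ 3 t).im * (γ' 3 t).re) = A := by
  -- continuity of o, ρ
  have co : Continuous o := by
    rw [continuous_iff_continuousAt]; exact fun t => (ho t).continuousAt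
  have cρ : Continuous ρ := by
    rw [continuous_iff_continuousAt]; exact fun t => (hρderiv t).continuousAt
  -- component derivatives of ρ
  have hre : ∀ t, HasDerivAt (fun s => (ρ s).re) ((ρ' t).re) t := fun t =>
    (Complex.reCLM.hasFDerivAt.comp_hasDerivAt t (hρderiv t))
  have him : ∀ t, HasDerivAt (fun s => (ρ s).im) ((ρ' t).im) t := fun t =>
    (Complex.imCLM.hasFDerivAt.comp_hasDerivAt t (hρderiv t))
  -- P 0 ≠ P 1
  have hP01 : P 0 ≠ P 1 := by
    intro he
    apply hgen 0 1 2 (by decide) (by decide) (by decide)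
    apply (collinear_pair ℝ (P 1) (P 2)).subset
    intro x hx
    rcases hx with rfl | rfl | rfl <;> simp [he]
  -- ρ is closed
  have e0 := hclosed 0
  have e1 := hclosed 1
  simp only [hγ] at e0 e1
  have hρcl : ρ t0 = ρ t1 := by
    rcases mul_eq_zero.mp (show (ρ t0 - ρ t1) * (P 0 - P 1) = 0 by
      linear_combination e0 - e1) with h | h
    · exact sub_eq_zero.mp h
    · exact absurd (sub_eq_zero.mp h) hP01
  -- closure integrals
  have Ja : (∫ t in t0..t1, ((ρ' t).re * (ρ t).im + (ρ t).re * (ρ' t).im)) = 0 := by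
    rw [intervalIntegral.integral_eq_sub_of_hasDerivAt
      (f := fun s => (ρ s).re * (ρ s).im) (fun t _ => (hre t).mul (him t))
      (Continuous.intervalIntegrable (by fun_prop) _ _)]
    rw [hρcl]; ring
  have Jb : (∫ t in t0..t1,
      (((ρ' t).re * (ρ t).re + (ρ t).re * (ρ' t).re
        - ((ρ' t).im * (ρ t).im + (ρ t).im * (ρ' t).im)) / 2)) = 0 := by
    rw [intervalIntegral.integral_eq_sub_of_hasDerivAt
      (f := fun s => ((ρ s).re * (ρ s).re - (ρ s).im * (ρ s).im) / 2)
      (fun t _ => (((hre t).mul (hre t)).sub ((him t).mul (him t))).div_const 2)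
      (Continuous.intervalIntegrable (by fun_prop) _ _)]
    rw [hρcl]; ring
  -- key expansion
  have key : ∀ z : ℂ, (∫ t in t0..t1, (o t + ρ t * z).im * (o' t + ρ' t * z).re)
      = (∫ t in t0..t1, (o t).im * (o' t).re)
        + z.re * (∫ t in t0..t1, ((o t).im * (ρ' t).re + (ρ t).im * (o' t).re))
        + z.im * (∫ t in t0..t1, ((ρ t).re * (o' t).re - (o t).im * (ρ' t).im))
        + (z.re ^ 2 + z.im ^ 2) * (∫ t in t0..t1, (ρ t).im * (ρ' t).re) := by
    intro z
    rw [intervalIntegral.integral_congr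
      (g := fun t => (o t).im * (o' t).re
        + z.re * ((o t).im * (ρ' t).re + (ρ t).im * (o' t).re)
        + z.im * ((ρ t).re * (o' t).re - (o t).im * (ρ' t).im)
        + (z.re ^ 2 + z.im ^ 2) * ((ρ t).im * (ρ' t).re)
        + (-(z.im ^ 2)) * ((ρ' t).re * (ρ t).im + (ρ t).re * (ρ' t).im)
        + (z.re * z.im) * (((ρ' t).re * (ρ t).re + (ρ t).re * (ρ' t).re
            - ((ρ' t).im * (ρ t).im + (ρ t).im * (ρ' t).im)) / 2))
      (fun t _ => by
        simp only [Complex.add_im, Complex.add_re, Complex.mul_im, Complex.mul_re]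
        ring)]
    rw [integral_six t0 t1 _ _ _ _ _ _ (by fun_prop) (by fun_prop) (by fun_prop)
      (by fun_prop) (by fun_prop) (by fun_prop)]
    rw [Ja, Jb]; ring
  -- circle identity
  have hsq : ∀ i, (P i).re ^ 2 + (P i).im ^ 2
      = r ^ 2 - (O.re ^ 2 + O.im ^ 2) + 2 * ((P i).re * O.re + (P i).im * O.im) := by
    intro i
    have h2 : Complex.normSq (P i - O) = r ^ 2 := by
      rw [← Complex.sq_norm, hcirc i]
    rw [Complex.normSq_apply, Complex.sub_re, Complex.sub_im] at h2
    linear_combination h2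
  -- value of each curve's area
  have hval : ∀ i : Fin 4, -(∫ t in t0..t1, (γ i t).im * (γ' i t).re)
      = -((∫ t in t0..t1, (o t).im * (o' t).re)
        + (P i).re * (∫ t in t0..t1, ((o t).im * (ρ' t).re + (ρ t).im * (o' t).re))
        + (P i).im * (∫ t in t0..t1, ((ρ t).re * (o' t).re - (o t).im * (ρ' t).im))
        + (r ^ 2 - (O.re ^ 2 + O.im ^ 2)
            + 2 * ((P i).re * O.re + (P i).im * O.im))
          * (∫ t in t0..t1, (ρ t).im * (ρ' t).re)) := by
    intro i
    simp only [hγ, hγ']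
    rw [key (P i), ← hsq i]
  have E0 := hA 0 (by decide); have E1 := hA 1 (by decide); have E2 := hA 2 (by decide)
  rw [hval 0] at E0; rw [hval 1] at E1; rw [hval 2] at E2
  rw [hval 3]
  -- determinant nonzero
  have hD : (P 1 - P 0).re * (P 2 - P 0).im - (P 1 - P 0).im * (P 2 - P 0).re ≠ 0 := by
    intro h
    exact hgen 0 1 2 (by decide) (by decide) (by decide)
      (collinear_of_det_eq_zero _ _ _ h)
  simp only [Complex.sub_re, Complex.sub_im] at hD
  set I1 := (∫ t in t0..t1, ((o t).im * (ρ' t).re + (ρ t).im * (o' t).re)) with hI1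
  set I2 := (∫ t in t0..t1, ((ρ t).re * (o' t).re - (o t).im * (ρ' t).im)) with hI2
  set I3 := (∫ t in t0..t1, (ρ t).im * (ρ' t).re) with hI3
  set I0 := (∫ t in t0..t1, (o t).im * (o' t).re) with hI0
  have hq1 : (I1 + 2 * O.re * I3) * ((P 1).re - (P 0).re)
      + (I2 + 2 * O.im * I3) * ((P 1).im - (P 0).im) = 0 := by
    linear_combination E0 - E1
  have hq2 : (I1 + 2 * O.re * I3) * ((P 2).re - (P 0).re)
      + (I2 + 2 * O.im * I3) * ((P 2).im - (P 0).im) = 0 := by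
    linear_combination E0 - E2
  have hDd : ((P 1).re - (P 0).re) * ((P 2).im - (P 0).im)
      - ((P 1).im - (P 0).im) * ((P 2).re - (P 0).re) ≠ 0 := hD
  have huD : (I1 + 2 * O.re * I3) * (((P 1).re - (P 0).re) * ((P 2).im - (P 0).im)
      - ((P 1).im - (P 0).im) * ((P 2).re - (P 0).re)) = 0 := by
    linear_combination ((P 2).im - (P 0).im) * hq1 - ((P 1).im - (P 0).im) * hq2
  have hvD : (I2 + 2 * O.im * I3) * (((P 1).re - (P 0).re) * ((P 2).im - (P 0).im)
      - ((P 1).im - (P 0).im) * ((P 2).re - (P 0).re)) = 0 := by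
    linear_combination ((P 1).re - (P 0).re) * hq2 - ((P 2).re - (P 0).re) * hq1
  have hu : I1 + 2 * O.re * I3 = 0 := by
    rcases mul_eq_zero.mp huD with h | h
    · exact h
    · exact absurd h hDd
  have hv : I2 + 2 * O.im * I3 = 0 := by
    rcases mul_eq_zero.mp hvD with h | h
    · exact h
    · exact absurd h hDd
  linear_combination E0 + ((P 0).re - (P 3).re) * hu + ((P 0).im - (P 3).im) * hv
end

section
/- Half-plane transfer lemma: Let P1P2P3P4 and Q1Q2Q3Q4 be two directly similar convex cyclic quadrilaterals with P4 = Q4. Then Q1 lies in the closed right half-plane of the directed line from P1 to P2 if and only if Q3 lies in the closed right half-plane of the directed line from P2 to P3. -/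
/-- The planar cross product of two vectors in `ℂ ≅ ℝ²`. -/
def cross (z w : ℂ) : ℝ := z.re * w.im - z.im * w.re

/-- Convex quadrilateral with vertices in counterclockwise order. -/
def CcwQuad (P : Fin 4 → ℂ) : Prop :=
  ∀ i : Fin 4, 0 < cross (P (i + 1) - P i) (P (i + 2) - P (i + 1))

/-- The four points lie on a common circle (of positive radius). -/
def Concyclic (P : Fin 4 → ℂ) : Prop :=
  ∃ (O : ℂ) (r : ℝ), 0 < r ∧ ∀ i, ‖P i - O‖ = r

/-- `X` lies in the closed right half-plane of the directed line from `A` to `B`. -/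
def RightOf (A B X : ℂ) : Prop := cross (B - A) (X - A) ≤ 0

lemma idA (x0 x1 x2 x3 y0 y1 y2 y3 ox oy r ur ui : ℝ)
    (c0 : (x0-ox)^2+(y0-oy)^2 = r^2)
    (c1 : (x1-ox)^2+(y1-oy)^2 = r^2)
    (c2 : (x2-ox)^2+(y2-oy)^2 = r^2)
    (c3 : (x3-ox)^2+(y3-oy)^2 = r^2) :
    (((x1-x0)*(x0-x3)+(y1-y0)*(y0-y3))^2 + ((x1-x0)*(y0-y3)-(y1-y0)*(x0-x3))^2)
      * ((x2-x1)*(ur*(y2-y3)+ui*(x2-x3)) - (y2-y1)*(ur*(x2-x3)-ui*(y2-y3)))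
    = (((x2-x1)*(x2-x3)+(y2-y1)*(y2-y3)) * ((x1-x0)*(x0-x3)+(y1-y0)*(y0-y3))
        + ((x2-x1)*(y2-y3)-(y2-y1)*(x2-x3)) * ((x1-x0)*(y0-y3)-(y1-y0)*(x0-x3)))
      * ((x1-x0)*(ur*(y0-y3)+ui*(x0-x3)) - (y1-y0)*(ur*(x0-x3)-ui*(y0-y3))) := by
  linear_combination (- 2*y2*y3^2*ox*ur - y2*y3^3*ui + 2*y2^2*y3*ox*ur + y2^2*y3^2*ui + 2*y1*y3^2*ox*ur + y1*y3^3*ui + y1*y2*y3^2*ui - 2*y1*y2^2*ox*ur - 2*y1*y2^2*y3*ui - 2*y1^2*y3*ox*ur - 2*y1^2*y3^2*ui + 2*y1^2*y2*ox*ur + y1^2*y2*y3*ui + y1^2*y2^2*ui + y1^3*y3*ui - y1^3*y2*ui + x3*y2*r^2*ur - x3*y2*oy^2*ur + 3*x3*y2*ox^2*ur + 2*x3*y2*y3*ox*ui + x3*y2*y3^2*ur - x3*y2^2*y3*ur - x3*y1*r^2*ur + x3*y1*oy^2*ur - 3*x3*y1*ox^2*ur - 2*x3*y1*y3*ox*ui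 - x3*y1*y3^2*ur - 2*x3*y1*y2*ox*ui + x3*y1*y2*y3*ur + 2*x3*y1*y2^2*ur + 2*x3*y1^2*ox*ui - 2*x3*y1^2*y2*ur + 2*x3*y0*y2*oy*ur - x3*y0*y2*y3*ur - x3*y0*y2^2*ur - 2*x3*y0*y1*oy*ur + x3*y0*y1*y3*ur - x3*y0*y1*y2*ur + 2*x3*y0*y1^2*ur + x3*y0^2*y2*ur - x3*y0^2*y1*ur - 4*x3^2*y2*ox*ur - x3^2*y2*y3*ui + 4*x3^2*y1*ox*ur + x3^2*y1*y3*ui + 2*x3^2*y1*y2*ui - 2*x3^2*y1^2*ui - x3^2*y0*y2*ui + x3^2*y0*y1*ui + x3^3*y2*ur - x3^3*y1*ur - x2*y3*r^2*ur + x2*y3*oy^2*ur - 3*x2*y3*ox^2*ur - 2*x2*y3^2*ox*ui + x2*y1*r^2*ur - x2*y1*oy^2*ur + 3*x2*y1*ox^2*ur + 4*x2*y1*y3*ox*ui - 2*x2*y1*y3^2*ur - 2*x2*y1^2*ox*ui + 2*x2*y1^2*y3*ur - 2*x2*y0*y3*oy*ur + 2*x2*y0*y3^2*ur + 2*x2*y0*y1*oy*ur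 - 2*x2*y0*y1^2*ur - x2*y0^2*y3*ur + x2*y0^2*y1*ur + 2*x2*x3*y3*ox*ur - 2*x2*x3*y1*ox*ur - x2*x3*y1*y3*ui + x2*x3*y1^2*ui + x2*x3*y0*y3*ui - x2*x3*y0*y1*ui - x2*x3^2*y1*ur + x2*x3^2*y0*ur + 2*x2^2*y3*ox*ur + x2^2*y3^2*ui - 2*x2^2*y1*ox*ur - 2*x2^2*y1*y3*ui + x2^2*y1^2*ui - x2^2*x3*y3*ur + 2*x2^2*x3*y1*ur - x2^2*x3*y0*ur + x1*y3*r^2*ur - x1*y3*oy^2*ur + 3*x1*y3*ox^2*ur + 2*x1*y3^2*ox*ui - x1*y2*r^2*ur + x1*y2*oy^2*ur - 3*x1*y2*ox^2*ur - 2*x1*y2*y3*ox*ui + 2*x1*y2*y3^2*ur - 2*x1*y2^2*y3*ur - 2*x1*y1*y3*ox*ui + 2*x1*y1*y2*ox*ui - x1*y1*y2*y3*ur + x1*y1*y2^2*ur + x1*y1^2*y3*ur - x1*y1^2*y2*ur + 2*x1*y0*y3*oy*ur - 2*x1*y0*y3^2*ur - 2*x1*y0*y2*oy*ur + x1*y0*y2*y3*ur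 + x1*y0*y2^2*ur - x1*y0*y1*y3*ur + x1*y0*y1*y2*ur + x1*y0^2*y3*ur - x1*y0^2*y2*ur - 2*x1*x3*y3*ox*ur - x1*x3*y2*y3*ui + 2*x1*x3*y1*ox*ur + 2*x1*x3*y1*y3*ui - x1*x3*y1*y2*ui - x1*x3*y0*y3*ui + 2*x1*x3*y0*y2*ui - x1*x3*y0*y1*ui + 3*x1*x3^2*y2*ur - 2*x1*x3^2*y1*ur - x1*x3^2*y0*ur + 2*x1*x2*y3*ox*ur + x1*x2*y3^2*ui - 2*x1*x2*y1*ox*ur - x1*x2*y1*y3*ui - x1*x2*y0*y3*ui + x1*x2*y0*y1*ui - x1*x2*x3*y3*ur + x1*x2*x3*y1*ur - 2*x1*x2^2*y3*ur + x1*x2^2*y1*ur + x1*x2^2*y0*ur - 4*x1^2*y3*ox*ur - 2*x1^2*y3^2*ui + 4*x1^2*y2*ox*ur + 2*x1^2*y2*y3*ui + x1^2*y1*y3*ui - x1^2*y1*y2*ui + x1^2*y0*y3*ui - x1^2*y0*y2*ui + 2*x1^2*x3*y3*ur - 3*x1^2*x3*y2*ur + x1^2*x3*y0*ur + x1^2*x2*y3*ur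 - x1^2*x2*y0*ur + x1^3*y3*ur - x1^3*y2*ur - x0*y2*y3^2*ur + x0*y2^2*y3*ur + x0*y1*y3^2*ur - x0*y1*y2^2*ur - x0*y1^2*y3*ur + x0*y1^2*y2*ur + 2*x0*x3*y2*ox*ur + x0*x3*y2*y3*ui - 2*x0*x3*y1*ox*ur - x0*x3*y1*y3*ui - x0*x3*y1*y2*ui + x0*x3*y1^2*ui - 2*x0*x3^2*y2*ur + 2*x0*x3^2*y1*ur - 2*x0*x2*y3*ox*ur - x0*x2*y3^2*ui + 2*x0*x2*y1*ox*ur + 2*x0*x2*y1*y3*ui - x0*x2*y1^2*ui + x0*x2*x3*y3*ur - x0*x2*x3*y1*ur + x0*x2^2*y3*ur - x0*x2^2*y1*ur + 2*x0*x1*y3*ox*ur + x0*x1*y3^2*ui - 2*x0*x1*y2*ox*ur - x0*x1*y2*y3*ui - x0*x1*y1*y3*ui + x0*x1*y1*y2*ui - x0*x1*x3*y3*ur + x0*x1*x3*y1*ur + x0*x1*x2*y3*ur - x0*x1*x2*y1*ur - 2*x0*x1^2*y3*ur + 2*x0*x1^2*y2*ur + x0^2*x3*y2*ur - x0^2*x3*y1*ur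 - x0^2*x2*y3*ur + x0^2*x2*y1*ur + x0^2*x1*y3*ur - x0^2*x1*y2*ur) * c0 + (- 2*y3*ox*r^2*ur + 2*y3*ox*oy^2*ur + 2*y3*ox^3*ur - 2*y3^2*r^2*ui + 2*y3^2*oy^2*ui + 2*y3^2*ox^2*ui + 2*y2*ox*r^2*ur - 2*y2*ox*oy^2*ur - 2*y2*ox^3*ur + 2*y2*y3*r^2*ui - 2*y2*y3*oy^2*ui - 2*y2*y3*ox^2*ui - y2*y3^3*ui + y2^2*y3^2*ui + y1*y3*r^2*ui - y1*y3*oy^2*ui - y1*y3*ox^2*ui - y1*y2*r^2*ui + y1*y2*oy^2*ui + y1*y2*ox^2*ui + y0*y3*r^2*ui - y0*y3*oy^2*ui - 4*y0*y3*ox*oy*ur - y0*y3*ox^2*ui - 4*y0*y3^2*oy*ui + y0*y3^3*ui - y0*y2*r^2*ui + y0*y2*oy^2*ui + 4*y0*y2*ox*oy*ur + y0*y2*ox^2*ui + 4*y0*y2*y3*oy*ui + y0*y2*y3^2*ui - 2*y0*y2^2*y3*ui + 2*y0*y1*y3*oy*ui - 2*y0*y1*y2*oy*ui + 2*y0^2*y3*oy*ui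 + 2*y0^2*y3*ox*ur - 2*y0^2*y2*oy*ui - 2*y0^2*y2*ox*ur - y0^2*y2*y3*ui + y0^2*y2^2*ui - y0^2*y1*y3*ui + y0^2*y1*y2*ui + 2*x3*y3*r^2*ur - 2*x3*y3*oy^2*ur - 2*x3*y3*ox^2*ur - 3*x3*y2*r^2*ur + 3*x3*y2*oy^2*ur + 3*x3*y2*ox^2*ur + 2*x3*y2*y3*ox*ui + x3*y2*y3^2*ur - x3*y2^2*y3*ur - x3*y1*y2*y3*ur + x3*y0*r^2*ur - x3*y0*oy^2*ur - x3*y0*ox^2*ur + 4*x3*y0*y3*oy*ur - 2*x3*y0*y3*ox*ui - x3*y0*y3^2*ur - 6*x3*y0*y2*oy*ur - 2*x3*y0*y2*ox*ui + x3*y0*y2*y3*ur + x3*y0*y2^2*ur + x3*y0*y1*y3*ur + x3*y0*y1*y2*ur + 2*x3*y0^2*oy*ur + 2*x3*y0^2*ox*ui - 2*x3*y0^2*y3*ur + x3*y0^2*y2*ur - x3*y0^2*y1*ur - 2*x3^2*y2*ox*ur - x3^2*y2*y3*ui - x3^2*y1*y2*ui + 2*x3^2*y0*ox*ur + x3^2*y0*y3*ui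 + 2*x3^2*y0*y2*ui + x3^2*y0*y1*ui - 2*x3^2*y0^2*ui + x3^3*y2*ur - x3^3*y0*ur + x2*y3*r^2*ur - x2*y3*oy^2*ur - x2*y3*ox^2*ur - 2*x2*y3^2*ox*ui + x2*y1*y3^2*ur - x2*y0*r^2*ur + x2*y0*oy^2*ur + x2*y0*ox^2*ur + 2*x2*y0*y3*oy*ur + 4*x2*y0*y3*ox*ui - x2*y0*y3^2*ur - 2*x2*y0*y1*y3*ur - 2*x2*y0^2*oy*ur - 2*x2*y0^2*ox*ui + x2*y0^2*y3*ur + x2*y0^2*y1*ur + 2*x2*x3*y3*ox*ur + x2*x3*y1*y3*ui - 2*x2*x3*y0*ox*ur - x2*x3*y0*y3*ui - x2*x3*y0*y1*ui + x2*x3*y0^2*ui + x2^2*y3^2*ui - 2*x2^2*y0*y3*ui + x2^2*y0^2*ui - x2^2*x3*y3*ur + x2^2*x3*y0*ur + x1*y3*r^2*ur - x1*y3*oy^2*ur - x1*y3*ox^2*ur - x1*y2*r^2*ur + x1*y2*oy^2*ur + x1*y2*ox^2*ur + 2*x1*y0*y3*oy*ur - 2*x1*y0*y2*oy*ur - x1*y0^2*y3*ur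 + x1*y0^2*y2*ur + x1*x3*y2*y3*ui - x1*x3*y0*y3*ui - x1*x3*y0*y2*ui + x1*x3*y0^2*ui - x1*x3^2*y2*ur + x1*x3^2*y0*ur - x1*x2*y3^2*ui + 2*x1*x2*y0*y3*ui - x1*x2*y0^2*ui + x1*x2*x3*y3*ur - x1*x2*x3*y0*ur - 2*x0*y3*r^2*ur + 2*x0*y3*oy^2*ur - 2*x0*y3*ox^2*ur - 2*x0*y3^2*ox*ui + 2*x0*y2*r^2*ur - 2*x0*y2*oy^2*ur + 2*x0*y2*ox^2*ur + 2*x0*y2*y3*ox*ui - x0*y2*y3^2*ur + x0*y2^2*y3*ur + 2*x0*y1*y3*ox*ui - x0*y1*y3^2*ur - 2*x0*y1*y2*ox*ui + x0*y1*y2*y3*ur - 4*x0*y0*y3*oy*ur + 2*x0*y0*y3^2*ur + 4*x0*y0*y2*oy*ur - x0*y0*y2*y3*ur - x0*y0*y2^2*ur + x0*y0*y1*y3*ur - x0*y0*y1*y2*ur + 2*x0*x3*y3*ox*ur - 2*x0*x3*y2*ox*ur - x0*x3*y2*y3*ui - x0*x3*y1*y3*ui + 2*x0*x3*y1*y2*ui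 + 2*x0*x3*y0*y3*ui - x0*x3*y0*y2*ui - x0*x3*y0*y1*ui + x0*x2*y3^2*ui - x0*x2*y1*y3*ui - x0*x2*y0*y3*ui + x0*x2*y0*y1*ui - x0*x2*x3*y3*ur + x0*x2*x3*y0*ur + x0*x2^2*y3*ur - x0*x2^2*y0*ur + 2*x0*x1*y3*ox*ur + x0*x1*y3^2*ui - 2*x0*x1*y2*ox*ur - x0*x1*y2*y3*ui - x0*x1*y0*y3*ui + x0*x1*y0*y2*ui - x0*x1*x3*y3*ur + 2*x0*x1*x3*y2*ur - x0*x1*x3*y0*ur - x0*x1*x2*y3*ur + x0*x1*x2*y0*ur) * c1 + (2*y3*ox*r^2*ur - 2*y3*ox*oy^2*ur - 2*y3*ox^3*ur + 2*y3^2*r^2*ui - 2*y3^2*oy^2*ui - 2*y3^2*ox^2*ui - 2*y1*ox*r^2*ur + 2*y1*ox*oy^2*ur + 2*y1*ox^3*ur - 2*y1*y3*r^2*ui + 2*y1*y3*oy^2*ui + 2*y1*y3*ox^2*ui + 2*y1*y3^2*oy*ui + y1^2*r^2*ui - y1^2*oy^2*ui - y1^2*ox^2*ui - y1^2*y3^2*ui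 - 2*y0*y3*r^2*ui + 2*y0*y3*oy^2*ui + 4*y0*y3*ox*oy*ur + 2*y0*y3*ox^2*ui + 2*y0*y3^2*oy*ui - 4*y0*y1*ox*oy*ur - 8*y0*y1*y3*oy*ui + 2*y0*y1^2*oy*ui + 2*y0*y1^2*y3*ui + y0^2*r^2*ui - y0^2*oy^2*ui - y0^2*ox^2*ui - 2*y0^2*y3*ox*ur - y0^2*y3^2*ui + 2*y0^2*y1*oy*ui + 2*y0^2*y1*ox*ur + 2*y0^2*y1*y3*ui - 2*y0^2*y1^2*ui - 2*x3*y3*r^2*ur + 2*x3*y3*oy^2*ur + 2*x3*y3*ox^2*ur + 2*x3*y1*r^2*ur - 2*x3*y1*oy^2*ur - 2*x3*y1*ox^2*ur - 2*x3*y1*y3*oy*ur + 2*x3*y1^2*y3*ur - 2*x3*y0*y3*oy*ur + 6*x3*y0*y1*oy*ur - 2*x3*y0*y1*y3*ur - 2*x3*y0*y1^2*ur - 2*x3*y0^2*oy*ur + 2*x3*y0^2*y3*ur + x3^2*y1^2*ui - 2*x3^2*y0*y1*ui + x3^2*y0^2*ui - 2*x1*y3*r^2*ur + 2*x1*y3*oy^2*ur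 + 2*x1*y3*ox^2*ur + 2*x1*y3^2*ox*ui + x1*y1*r^2*ur - x1*y1*oy^2*ur - x1*y1*ox^2*ur - x1*y1*y3^2*ur + x1*y0*r^2*ur - x1*y0*oy^2*ur - x1*y0*ox^2*ur - 4*x1*y0*y3*oy*ur - 4*x1*y0*y3*ox*ui + x1*y0*y3^2*ur + 2*x1*y0*y1*oy*ur + 2*x1*y0*y1*y3*ur + 2*x1*y0^2*oy*ur + 2*x1*y0^2*ox*ui - 2*x1*y0^2*y1*ur - 2*x1*x3*y3*ox*ur - 2*x1*x3*y1*y3*ui + 2*x1*x3*y0*ox*ur + 2*x1*x3*y0*y3*ui + 2*x1*x3*y0*y1*ui - 2*x1*x3*y0^2*ui + x1*x3^2*y1*ur - x1*x3^2*y0*ur + 2*x0*y3*r^2*ur - 2*x0*y3*oy^2*ur + 2*x0*y3*ox^2*ur + 2*x0*y3^2*ox*ui - x0*y1*r^2*ur + x0*y1*oy^2*ur - 3*x0*y1*ox^2*ur + 2*x0*y1*y3*oy*ur - 4*x0*y1*y3*ox*ui + x0*y1*y3^2*ur + 2*x0*y1^2*ox*ui - 2*x0*y1^2*y3*ur - x0*y0*r^2*ur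 + x0*y0*oy^2*ur + x0*y0*ox^2*ur + 2*x0*y0*y3*oy*ur - x0*y0*y3^2*ur - 4*x0*y0*y1*oy*ur + 2*x0*y0*y1^2*ur - 2*x0*x3*y3*ox*ur + 4*x0*x3*y1*ox*ur + 2*x0*x3*y1*y3*ui - 2*x0*x3*y1^2*ui - 2*x0*x3*y0*ox*ur - 2*x0*x3*y0*y3*ui + 2*x0*x3*y0*y1*ui - x0*x3^2*y1*ur + x0*x3^2*y0*ur - 2*x0*x1*y3*ox*ur - 2*x0*x1*y3^2*ui + 2*x0*x1*y1*ox*ur + 2*x0*x1*y1*y3*ui + 2*x0*x1*y0*y3*ui - 2*x0*x1*y0*y1*ui + 2*x0*x1*x3*y3*ur - 2*x0*x1*x3*y1*ur) * c2 + (- 2*y2*ox*r^2*ur + 2*y2*ox*oy^2*ur + 2*y2*ox^3*ur - 2*y2*y3*r^2*ui + 2*y2*y3*oy^2*ui + 2*y2*y3*ox^2*ui + 2*y1*ox*r^2*ur - 2*y1*ox*oy^2*ur - 2*y1*ox^3*ur + y1*y3*r^2*ui - y1*y3*oy^2*ui - y1*y3*ox^2*ui + y1*y2*r^2*ui - y1*y2*oy^2*ui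 - y1*y2*ox^2*ui - 2*y1*y2*y3*oy*ui - y1^2*r^2*ui + y1^2*oy^2*ui + y1^2*ox^2*ui + y1^2*y2*y3*ui + y0*y3*r^2*ui - y0*y3*oy^2*ui - y0*y3*ox^2*ui + y0*y2*r^2*ui - y0*y2*oy^2*ui - 4*y0*y2*ox*oy*ur - y0*y2*ox^2*ui - 2*y0*y2*y3*oy*ui + 4*y0*y1*ox*oy*ur + 4*y0*y1*y3*oy*ui + 4*y0*y1*y2*oy*ui - 2*y0*y1^2*oy*ui - y0*y1^2*y3*ui - y0*y1^2*y2*ui - y0^2*r^2*ui + y0^2*oy^2*ui + y0^2*ox^2*ui + 2*y0^2*y2*ox*ur + y0^2*y2*y3*ui - 2*y0^2*y1*oy*ui - 2*y0^2*y1*ox*ur - y0^2*y1*y3*ui - y0^2*y1*y2*ui + 2*y0^2*y1^2*ui + 2*x3*y2*r^2*ur - 2*x3*y2*oy^2*ur - 2*x3*y2*ox^2*ur - x3*y1*r^2*ur + x3*y1*oy^2*ur + x3*y1*ox^2*ur + 2*x3*y1*y2*oy*ur - x3*y1^2*y2*ur - x3*y0*r^2*ur + x3*y0*oy^2*ur +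 x3*y0*ox^2*ur + 2*x3*y0*y2*oy*ur - 4*x3*y0*y1*oy*ur + x3*y0*y1^2*ur - x3*y0^2*y2*ur + x3*y0^2*y1*ur - x2*y1*r^2*ur + x2*y1*oy^2*ur + x2*y1*ox^2*ur - x2*y1^2*y3*ur + x2*y0*r^2*ur - x2*y0*oy^2*ur - x2*y0*ox^2*ur - 2*x2*y0*y1*oy*ur + 2*x2*y0*y1*y3*ur + x2*y0*y1^2*ur + 2*x2*y0^2*oy*ur - x2*y0^2*y3*ur - x2*y0^2*y1*ur - x2*x3*y1^2*ui + 2*x2*x3*y0*y1*ui - x2*x3*y0^2*ui + 2*x1*y2*r^2*ur - 2*x1*y2*oy^2*ur - 2*x1*y2*ox^2*ur - 2*x1*y2*y3*ox*ui - x1*y1*r^2*ur + x1*y1*oy^2*ur + x1*y1*ox^2*ur + x1*y1*y2*y3*ur - x1*y0*r^2*ur + x1*y0*oy^2*ur + x1*y0*ox^2*ur + 2*x1*y0*y3*ox*ui + 4*x1*y0*y2*oy*ur + 2*x1*y0*y2*ox*ui - x1*y0*y2*y3*ur - 2*x1*y0*y1*oy*ur - x1*y0*y1*y3*ur - x1*y0*y1*y2*ur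 - 2*x1*y0^2*oy*ur - 2*x1*y0^2*ox*ui + x1*y0^2*y3*ur - x1*y0^2*y2*ur + 2*x1*y0^2*y1*ur + 2*x1*x3*y2*ox*ur + x1*x3*y1*y2*ui - 2*x1*x3*y0*ox*ur - x1*x3*y0*y2*ui - x1*x3*y0*y1*ui + x1*x3*y0^2*ui + x1*x2*y1*y3*ui - x1*x2*y0*y3*ui - x1*x2*y0*y1*ui + x1*x2*y0^2*ui - x1*x2*x3*y1*ur + x1*x2*x3*y0*ur - 2*x0*y2*r^2*ur + 2*x0*y2*oy^2*ur - 2*x0*y2*ox^2*ur - 2*x0*y2*y3*ox*ui + x0*y1*r^2*ur - x0*y1*oy^2*ur + 3*x0*y1*ox^2*ur + 2*x0*y1*y3*ox*ui - 2*x0*y1*y2*oy*ur + 2*x0*y1*y2*ox*ui - x0*y1*y2*y3*ur - 2*x0*y1^2*ox*ui + x0*y1^2*y3*ur + x0*y1^2*y2*ur + x0*y0*r^2*ur - x0*y0*oy^2*ur - x0*y0*ox^2*ur - 2*x0*y0*y2*oy*ur + x0*y0*y2*y3*ur + 4*x0*y0*y1*oy*ur - x0*y0*y1*y3*ur + x0*y0*y1*y2*ur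 - 2*x0*y0*y1^2*ur + 2*x0*x3*y2*ox*ur - 2*x0*x3*y1*ox*ur - x0*x3*y1*y2*ui + x0*x3*y1^2*ui + x0*x3*y0*y2*ui - x0*x3*y0*y1*ui - 2*x0*x2*y1*ox*ur - x0*x2*y1*y3*ui + x0*x2*y1^2*ui + 2*x0*x2*y0*ox*ur + x0*x2*y0*y3*ui - x0*x2*y0*y1*ui + x0*x2*x3*y1*ur - x0*x2*x3*y0*ur + 2*x0*x1*y2*ox*ur + 2*x0*x1*y2*y3*ui - 2*x0*x1*y1*ox*ur - x0*x1*y1*y3*ui - x0*x1*y1*y2*ui - x0*x1*y0*y3*ui - x0*x1*y0*y2*ui + 2*x0*x1*y0*y1*ui - 2*x0*x1*x3*y2*ur + x0*x1*x3*y1*ur + x0*x1*x3*y0*ur + x0*x1*x2*y1*ur - x0*x1*x2*y0*ur) * c3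

lemma idB (x0 x1 x2 x3 y0 y1 y2 y3 ox oy r : ℝ)
    (c0 : (x0-ox)^2+(y0-oy)^2 = r^2)
    (c1 : (x1-ox)^2+(y1-oy)^2 = r^2)
    (c2 : (x2-ox)^2+(y2-oy)^2 = r^2)
    (c3 : (x3-ox)^2+(y3-oy)^2 = r^2) :
    (((x2-x1)*(x2-x3)+(y2-y1)*(y2-y3)) * ((x1-x0)*(x0-x3)+(y1-y0)*(y0-y3))
        + ((x2-x1)*(y2-y3)-(y2-y1)*(x2-x3)) * ((x1-x0)*(y0-y3)-(y1-y0)*(x0-x3)))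
      * ((x2-x0)^2+(y2-y0)^2)
    = 4*r^2*(((x1-x0)*(y2-y1)-(y1-y0)*(x2-x1)) * ((x3-x2)*(y0-y3)-(y3-y2)*(x0-x3))) := by
  linear_combination (- 3*y2*y3*r^2 - y2*y3*oy^2 + 3*y2*y3*ox^2 + 3*y2^2*r^2 + y2^2*oy^2 - 3*y2^2*ox^2 + y2^3*y3 - y2^4 + 3*y1*y3*r^2 + y1*y3*oy^2 - 3*y1*y3*ox^2 - 3*y1*y2*r^2 - y1*y2*oy^2 + 3*y1*y2*ox^2 + y1*y2*y3^2 - 2*y1*y2^2*y3 + y1*y2^3 - y1^2*y3^2 + y1^2*y2*y3 + 2*y0*y2*y3*oy - y0*y2*y3^2 - 2*y0*y2^2*oy - y0*y2^2*y3 + 2*y0*y2^3 - 2*y0*y1*y3*oy + y0*y1*y3^2 + 2*y0*y1*y2*oy - y0*y1*y2^2 + y0*y1^2*y3 - y0*y1^2*y2 + y0^2*y2*y3 - y0^2*y2^2 - y0^2*y1*y3 + y0^2*y1*y2 + 2*x3*y2^2*ox - 4*x3*y1*y2*ox + 2*x3*y1^2*ox + x3^2*y1*y2 - x3^2*y1^2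 - x3^2*y0*y2 + x3^2*y0*y1 - 2*x2*y3^2*ox - 4*x2*y2*y3*ox + 4*x2*y2^2*ox + 8*x2*y1*y3*ox - 4*x2*y1*y2*ox - 2*x2*y1^2*ox + x2*x3*r^2 - x2*x3*oy^2 + 3*x2*x3*ox^2 - x2*x3*y2^2 + 4*x2*x3*y1*y2 - x2*x3*y1^2 + 2*x2*x3*y0*oy - 2*x2*x3*y0*y2 - 2*x2*x3*y0*y1 + x2*x3*y0^2 - 2*x2*x3^2*ox - x2^2*r^2 + x2^2*oy^2 - 3*x2^2*ox^2 + 2*x2^2*y3^2 + x2^2*y2*y3 - 2*x2^2*y2^2 - 6*x2^2*y1*y3 + x2^2*y1*y2 + 2*x2^2*y1^2 - 2*x2^2*y0*oy + x2^2*y0*y3 + 2*x2^2*y0*y2 + x2^2*y0*y1 - x2^2*y0^2 - 2*x2^2*x3*ox + 2*x2^2*x3^2 + 4*x2^3*ox - x2^3*x3 - x2^4 + 2*x1*y3^2*ox - 4*x1*y2*y3*ox + 2*x1*y2^2*ox - x1*x3*r^2 + x1*x3*oy^2 - 3*x1*x3*ox^2 - 2*x1*x3*y2^2 - 2*x1*x3*y0*oy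 + 4*x1*x3*y0*y2 - x1*x3*y0^2 + 2*x1*x3^2*ox + x1*x2*r^2 - x1*x2*oy^2 + 3*x1*x2*ox^2 - x1*x2*y3^2 + 4*x1*x2*y2*y3 - x1*x2*y2^2 + 2*x1*x2*y0*oy - 2*x1*x2*y0*y3 - 2*x1*x2*y0*y2 + x1*x2*y0^2 - x1*x2*x3^2 - 2*x1*x2^2*ox + 2*x1*x2^2*x3 - x1*x2^3 - x1^2*y3^2 + x1^2*y2*y3 + x1^2*y0*y3 - x1^2*y0*y2 + 2*x1^2*x3*ox - x1^2*x3^2 - 2*x1^2*x2*ox - x1^2*x2*x3 + 2*x1^2*x2^2 + 2*x0*y2*y3*ox - 2*x0*y2^2*ox - 2*x0*y1*y3*ox + 2*x0*y1*y2*ox + x0*x3*y2^2 - 2*x0*x3*y1*y2 + x0*x3*y1^2 - x0*x2*y3^2 - 2*x0*x2*y2*y3 + 2*x0*x2*y2^2 + 4*x0*x2*y1*y3 - 2*x0*x2*y1*y2 - x0*x2*y1^2 + 2*x0*x2*x3*ox - x0*x2*x3^2 - 2*x0*x2^2*ox - x0*x2^2*x3 + 2*x0*x2^3 + x0*x1*y3^2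 - 2*x0*x1*y2*y3 + x0*x1*y2^2 - 2*x0*x1*x3*ox + x0*x1*x3^2 + 2*x0*x1*x2*ox - x0*x1*x2^2 + x0*x1^2*x3 - x0*x1^2*x2 + x0^2*y2*y3 - x0^2*y2^2 - x0^2*y1*y3 + x0^2*y1*y2 + x0^2*x2*x3 - x0^2*x2^2 - x0^2*x1*x3 + x0^2*x1*x2) * c0 + (- y3^2*r^2 + y3^2*oy^2 + y3^2*ox^2 + y2*y3*r^2 - y2*y3*oy^2 - y2*y3*ox^2 - y2^2*y3^2 + y2^3*y3 + y0*y3*r^2 - y0*y3*oy^2 - y0*y3*ox^2 - 2*y0*y3^2*oy - y0*y2*r^2 + y0*y2*oy^2 + y0*y2*ox^2 + 2*y0*y2*y3*oy + 2*y0*y2*y3^2 - y0*y2^2*y3 - y0*y2^3 + 2*y0^2*y3*oy - 2*y0^2*y2*oy - 2*y0^2*y2*y3 + 2*y0^2*y2^2 + 2*x3*ox*r^2 - 2*x3*ox*oy^2 - 2*x3*ox^3 + 4*x3*y0*ox*oy - 2*x3*y0^2*ox - x3^2*r^2 + x3^2*oy^2 + x3^2*ox^2 - x3^2*y2^2 -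 2*x3^2*y0*oy + 2*x3^2*y0*y2 - 2*x2*ox*r^2 + 2*x2*ox*oy^2 + 2*x2*ox^3 - 4*x2*y0*ox*oy + 2*x2*y0^2*ox - x2*x3*r^2 + x2*x3*oy^2 + x2*x3*ox^2 + x2*x3*y2^2 - 2*x2*x3*y0*oy - 2*x2*x3*y0*y2 + 2*x2*x3*y0^2 + 2*x2^2*r^2 - 2*x2^2*oy^2 - 2*x2^2*ox^2 - x2^2*y3^2 + x2^2*y2*y3 + 4*x2^2*y0*oy + x2^2*y0*y3 - x2^2*y0*y2 - 2*x2^2*y0^2 - x2^2*x3^2 + x2^3*x3 - 2*x0*y3^2*ox + 2*x0*y2*y3*ox + 2*x0*y0*y3*ox - 2*x0*y0*y2*ox + x0*x3*r^2 - x0*x3*oy^2 + 3*x0*x3*ox^2 + x0*x3*y2^2 + 2*x0*x3*y0*oy - 2*x0*x3*y0*y2 - 2*x0*x3^2*ox - x0*x2*r^2 + x0*x2*oy^2 - 3*x0*x2*ox^2 + 2*x0*x2*y3^2 - 2*x0*x2*y2*y3 - x0*x2*y2^2 - 2*x0*x2*y0*oy - 2*x0*x2*y0*y3 + 4*x0*x2*y0*y2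 - 2*x0*x2*x3*ox + 2*x0*x2*x3^2 + 4*x0*x2^2*ox - x0*x2^2*x3 - x0*x2^3) * c1 + (y3^2*r^2 - y3^2*oy^2 - y3^2*ox^2 - 2*y2*oy*r^2 + 2*y2*oy^3 + 2*y2*ox^2*oy + 2*y2*y3*r^2 - 2*y2*y3*oy^2 - 2*y2*y3*ox^2 - y2^2*r^2 + y2^2*oy^2 + y2^2*ox^2 + 4*y1*oy*r^2 - 4*y1*oy^3 - 4*y1*ox^2*oy - 3*y1*y3*r^2 + 7*y1*y3*oy^2 + 3*y1*y3*ox^2 - 2*y1*y3^2*oy + y1*y2*r^2 - y1*y2*oy^2 - y1*y2*ox^2 + y1*y2*y3^2 - y1*y2^2*y3 - 2*y0*oy*r^2 + 2*y0*oy^3 + 2*y0*ox^2*oy - y0*y3*r^2 - 3*y0*y3*oy^2 + y0*y3*ox^2 + 4*y0*y3^2*oy + y0*y2*r^2 - 5*y0*y2*oy^2 - y0*y2*ox^2 + 4*y0*y2*y3*oy - y0*y2*y3^2 - 2*y0*y2^2*oy + y0*y2^2*y3 - 2*y0*y1*r^2 + 6*y0*y1*oy^2 + 2*y0*y1*ox^2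 - 10*y0*y1*y3*oy + y0*y1*y3^2 + 2*y0*y1*y2*oy + y0*y1*y2^2 + 2*y0^2*r^2 - 2*y0^2*oy^2 - 2*y0^2*ox^2 + 2*y0^2*y3*oy - 2*y0^2*y3^2 + 4*y0^2*y2*oy - 2*y0^2*y2*y3 - 2*y0^2*y1*oy + 4*y0^2*y1*y3 - 2*y0^2*y1*y2 - 2*x3*ox*r^2 + 2*x3*ox*oy^2 + 2*x3*ox^3 + 4*x3*y1*ox*oy - 8*x3*y0*ox*oy - 4*x3*y0*y1*ox + 6*x3*y0^2*ox + x3^2*r^2 - x3^2*oy^2 - x3^2*ox^2 - 2*x3^2*y1*oy + x3^2*y1*y2 + 4*x3^2*y0*oy - x3^2*y0*y2 + x3^2*y0*y1 - 2*x3^2*y0^2 + 2*x2*ox*r^2 - 2*x2*ox*oy^2 - 2*x2*ox^3 - 2*x2*y1*y3*ox + 4*x2*y0*ox*oy + 2*x2*y0*y3*ox + 2*x2*y0*y1*ox - 4*x2*y0^2*ox + 2*x2*x3*y1*oy - 2*x2*x3*y0*oy - 2*x2*x3*y0*y1 + 2*x2*x3*y0^2 - x2^2*r^2 + x2^2*oy^2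 + x2^2*ox^2 - x2^2*y1*y3 - 2*x2^2*y0*oy + x2^2*y0*y3 + x2^2*y0*y1 + 2*x1*y2*y3*ox - 2*x1*y0*y3*ox - 2*x1*y0*y2*ox + 2*x1*y0^2*ox + x1*x3*r^2 - x1*x3*oy^2 - x1*x3*ox^2 - 2*x1*x3*y2*oy - x1*x3*y2^2 + 4*x1*x3*y0*oy + 4*x1*x3*y0*y2 - 4*x1*x3*y0^2 - x1*x2*r^2 + x1*x2*oy^2 + x1*x2*ox^2 + x1*x2*y3^2 - 2*x1*x2*y0*oy - 2*x1*x2*y0*y3 + 2*x1*x2*y0^2 + x1*x2*x3^2 - x1*x2^2*x3 + 2*x0*y3^2*ox - 4*x0*y2*ox*oy + 2*x0*y2*y3*ox - 2*x0*y2^2*ox + 4*x0*y1*ox*oy - 4*x0*y1*y3*ox + 2*x0*y1*y2*ox - 2*x0*y0*y3*ox + 4*x0*y0*y2*ox - 2*x0*y0*y1*ox - x0*x3*r^2 + x0*x3*oy^2 - 3*x0*x3*ox^2 + 2*x0*x3*y2*oy + x0*x3*y2^2 - 2*x0*x3*y1*oy - 2*x0*x3*y1*y2 - 2*x0*x3*y0*oy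 - 2*x0*x3*y0*y2 + 4*x0*x3*y0*y1 + 2*x0*x3^2*ox + x0*x2*r^2 - x0*x2*oy^2 + 3*x0*x2*ox^2 - x0*x2*y3^2 - 2*x0*x2*y1*oy + 4*x0*x2*y1*y3 + 4*x0*x2*y0*oy - 2*x0*x2*y0*y3 - 2*x0*x2*y0*y1 - x0*x2*x3^2 - 2*x0*x2^2*ox + x0*x2^2*x3 - x0*x1*y3^2 + 2*x0*x1*y2*oy - 2*x0*x1*y2*y3 + x0*x1*y2^2 - 2*x0*x1*y0*oy + 4*x0*x1*y0*y3 - 2*x0*x1*y0*y2 + 2*x0*x1*x3*ox - x0*x1*x3^2 - 2*x0*x1*x2*ox + x0*x1*x2^2) * c2 + (2*y2*oy*r^2 - 2*y2*oy^3 - 2*y2*ox^2*oy - 2*y2^2*r^2 + 2*y2^2*oy^2 + 2*y2^2*ox^2 - 4*y1*oy*r^2 + 4*y1*oy^3 + 4*y1*ox^2*oy + 2*y1*y2*r^2 - 6*y1*y2*oy^2 - 2*y1*y2*ox^2 + 2*y1*y2^2*oy + 2*y0*oy*r^2 - 2*y0*oy^3 - 2*y0*ox^2*oy + 8*y0*y2*oy^2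 - 6*y0*y2^2*oy + 2*y0*y1*r^2 - 6*y0*y1*oy^2 - 2*y0*y1*ox^2 + 8*y0*y1*y2*oy - 2*y0*y1*y2^2 - 2*y0^2*r^2 + 2*y0^2*oy^2 + 2*y0^2*ox^2 - 6*y0^2*y2*oy + 4*y0^2*y2^2 + 2*y0^2*y1*oy - 2*y0^2*y1*y2 - 4*x2*y1*ox*oy + 2*x2*y1*y2*ox + 4*x2*y0*ox*oy - 2*x2*y0*y2*ox + 2*x2*y0*y1*ox - 2*x2*y0^2*ox - 2*x1*y2^2*ox + 4*x1*y0*y2*ox - 2*x1*y0^2*ox + 2*x1*x2*y2*oy - 2*x1*x2*y0*oy - 2*x1*x2*y0*y2 + 2*x1*x2*y0^2 + 4*x0*y2*ox*oy - 2*x0*y2^2*ox - 4*x0*y1*ox*oy + 2*x0*y1*y2*ox - 2*x0*y0*y2*ox + 2*x0*y0*y1*ox - 2*x0*x2*y2*oy + 4*x0*x2*y1*oy - 2*x0*x2*y1*y2 - 2*x0*x2*y0*oy + 4*x0*x2*y0*y2 - 2*x0*x2*y0*y1 - 2*x0*x1*y2*oy + 2*x0*x1*y2^2 + 2*x0*x1*y0*oy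 - 2*x0*x1*y0*y2) * c3

lemma cs_left (a b c d : ℝ) (h : 0 < a*d - b*c) : 0 < a^2 + b^2 := by
  nlinarith [sq_nonneg (a*c+b*d), sq_nonneg c, sq_nonneg d, mul_pos h h]

lemma cs_right (a b c d : ℝ) (h : 0 < a*d - b*c) : 0 < c^2 + d^2 := by
  nlinarith [sq_nonneg (a*c+b*d), sq_nonneg a, sq_nonneg b, mul_pos h h]

lemma pos_of_mul_eq (L n c : ℝ) (h : L * n = c) (hc : 0 < c) (hn : 0 < n) : 0 < L := by
  nlinarith

lemma transfer_iff (M L E1 E2 : ℝ) (hM : 0 < M) (hL : 0 < L) (h : M * E2 = L * E1) :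
    E1 ≤ 0 ↔ E2 ≤ 0 := by
  constructor <;> intro h' <;> nlinarith

/-- Key real-variable lemma: the half-plane transfer, in coordinates. -/
lemma key_transfer (x0 x1 x2 x3 y0 y1 y2 y3 ox oy r ur ui : ℝ)
    (hr : 0 < r)
    (c0 : (x0-ox)^2+(y0-oy)^2 = r^2)
    (c1 : (x1-ox)^2+(y1-oy)^2 = r^2)
    (c2 : (x2-ox)^2+(y2-oy)^2 = r^2)
    (c3 : (x3-ox)^2+(y3-oy)^2 = r^2)
    (hg0 : 0 < (x1-x0)*(y2-y1)-(y1-y0)*(x2-x1))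
    (hg2 : 0 < (x3-x2)*(y0-y3)-(y3-y2)*(x0-x3)) :
    (x1-x0)*(ur*(y0-y3)+ui*(x0-x3)) - (y1-y0)*(ur*(x0-x3)-ui*(y0-y3)) ≤ 0 ↔
    (x2-x1)*(ur*(y2-y3)+ui*(x2-x3)) - (y2-y1)*(ur*(x2-x3)-ui*(y2-y3)) ≤ 0 := by
  have hs01 : 0 < (x1-x0)^2+(y1-y0)^2 := cs_left _ _ _ _ hg0
  have hs03 : 0 < (x0-x3)^2+(y0-y3)^2 := cs_right _ _ _ _ hg2
  have hg0' : 0 < (x1-x0)*(y2-y0)-(y1-y0)*(x2-x0) := by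
    have e : (x1-x0)*(y2-y0)-(y1-y0)*(x2-x0) = (x1-x0)*(y2-y1)-(y1-y0)*(x2-x1) := by ring
    rw [e]; exact hg0
  have hn02 : 0 < (x2-x0)^2+(y2-y0)^2 := cs_right _ _ _ _ hg0'
  have hL : 0 < ((x2-x1)*(x2-x3)+(y2-y1)*(y2-y3)) * ((x1-x0)*(x0-x3)+(y1-y0)*(y0-y3))
      + ((x2-x1)*(y2-y3)-(y2-y1)*(x2-x3)) * ((x1-x0)*(y0-y3)-(y1-y0)*(x0-x3)) := by
    refine pos_of_mul_eq _ ((x2-x0)^2+(y2-y0)^2) _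
      (idB x0 x1 x2 x3 y0 y1 y2 y3 ox oy r c0 c1 c2 c3) ?_ hn02
    have : (0:ℝ) < 4*r^2 := by positivity
    exact mul_pos this (mul_pos hg0 hg2)
  have hM : 0 < ((x1-x0)*(x0-x3)+(y1-y0)*(y0-y3))^2 + ((x1-x0)*(y0-y3)-(y1-y0)*(x0-x3))^2 := by
    have e : ((x1-x0)*(x0-x3)+(y1-y0)*(y0-y3))^2 + ((x1-x0)*(y0-y3)-(y1-y0)*(x0-x3))^2
        = ((x1-x0)^2+(y1-y0)^2)*((x0-x3)^2+(y0-y3)^2) := by ring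
    rw [e]; exact mul_pos hs01 hs03
  exact transfer_iff _ _ _ _ hM hL (idA x0 x1 x2 x3 y0 y1 y2 y3 ox oy r ur ui c0 c1 c2 c3)

/-- Half-plane transfer lemma: Let `P₁P₂P₃P₄` and `Q₁Q₂Q₃Q₄` be directly similar
convex cyclic quadrilaterals with `P₄ = Q₄`.  Then `Q₁` lies to the right of the directed line
`P₁P₂` iff `Q₃` lies to the right of the directed line `P₂P₃`. -/
theorem stmt10 (P Q : Fin 4 → ℂ)
    (hPcon : Concyclic P) (hPccw : CcwQuad P)
    (hQcon : Concyclic Q) (hQccw : CcwQuad Q)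
    (a ρ : ℂ) (hρ : ρ ≠ 0) (hsim : ∀ i, Q i = a + ρ * P i)
    (h4 : Q 3 = P 3) :
    RightOf (P 0) (P 1) (Q 0) ↔ RightOf (P 1) (P 2) (Q 2) := by
  obtain ⟨O, r, hr, hcirc⟩ := hPcon
  have circ : ∀ i : Fin 4, ((P i).re - O.re)^2 + ((P i).im - O.im)^2 = r^2 := by
    intro i
    have h2 : Complex.normSq (P i - O) = r^2 := by rw [← Complex.sq_norm, hcirc i]
    rw [Complex.normSq_apply, Complex.sub_re, Complex.sub_im] at h2
    linear_combination h2
  have g0 : 0 < cross (P 1 - P 0) (P 2 - P 1) := by simpa using hPccw 0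
  have g2 : 0 < cross (P 3 - P 2) (P 0 - P 3) := by simpa using hPccw 2
  have hQ0 : Q 0 - P 0 = (ρ - 1) * (P 0 - P 3) := by
    linear_combination hsim 0 + h4 - hsim 3
  have hQ2 : Q 2 - P 1 = (ρ - 1) * (P 2 - P 3) + (P 2 - P 1) := by
    linear_combination hsim 2 + h4 - hsim 3
  have e1eq : cross (P 1 - P 0) (Q 0 - P 0)
      = ((P 1).re-(P 0).re)*((ρ.re-1)*((P 0).im-(P 3).im)+ρ.im*((P 0).re-(P 3).re))
        - ((P 1).im-(P 0).im)*((ρ.re-1)*((P 0).re-(P 3).re)-ρ.im*((P 0).im-(P 3).im)) := by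
    rw [hQ0]
    simp only [cross, Complex.sub_re, Complex.sub_im, Complex.mul_re, Complex.mul_im,
      Complex.one_re, Complex.one_im]
    ring
  have e2eq : cross (P 2 - P 1) (Q 2 - P 1)
      = ((P 2).re-(P 1).re)*((ρ.re-1)*((P 2).im-(P 3).im)+ρ.im*((P 2).re-(P 3).re))
        - ((P 2).im-(P 1).im)*((ρ.re-1)*((P 2).re-(P 3).re)-ρ.im*((P 2).im-(P 3).im)) := by
    rw [hQ2]
    simp only [cross, Complex.sub_re, Complex.sub_im, Complex.mul_re, Complex.mul_im,
      Complex.add_re, Complex.add_im, Complex.one_re, Complex.one_im]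
    ring
  have g0' : 0 < ((P 1).re-(P 0).re)*((P 2).im-(P 1).im)-((P 1).im-(P 0).im)*((P 2).re-(P 1).re) := by
    simpa only [cross, Complex.sub_re, Complex.sub_im] using g0
  have g2' : 0 < ((P 3).re-(P 2).re)*((P 0).im-(P 3).im)-((P 3).im-(P 2).im)*((P 0).re-(P 3).re) := by
    simpa only [cross, Complex.sub_re, Complex.sub_im] using g2
  show cross (P 1 - P 0) (Q 0 - P 0) ≤ 0 ↔ cross (P 2 - P 1) (Q 2 - P 1) ≤ 0
  rw [e1eq, e2eq]
  exact key_transfer (P 0).re (P 1).re (P 2).re (P 3).re (P 0).im (P 1).im (P 2).im (P 3).im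
    O.re O.im r (ρ.re - 1) ρ.im hr (circ 0) (circ 1) (circ 2) (circ 3) g0' g2'
end
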